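/- Let T be a left exact comonad on a finite linear category M, X a finite linear category, and F : M → X a left exact functor equipped with a comodule structure over the comonad T* (F ↦ F ∘ T) on Fun^le(M, X). Then the corresponding left exact functor Θ(F) : Comod_T(M) → X can be computed pointwise as the equalizer Θ(F)(z) → F(U z) ⇉ F(T(U z)), where one morphism is induced by the T*-comodule structure of F and the other by the T-comodule structure of z, and U is the forgetful functor. -/

import Mathlib

open CategoryTheory CategoryTheory.Limits

namespace PointwiseEqAux

variable {M X : Type*} [Category M] [Category X] [Abelian M] [Abelian X]
variable (T : Comonad M) (F : M ⥤ X) (ρ : F ⟶ T.toFunctor ⋙ F)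

/-- The difference natural transformation whose kernel is `Θ(F)`. -/
@[simps]
def phi : (T.forget ⋙ F) ⟶ (T.forget ⋙ T.toFunctor ⋙ F) where
  app z := ρ.app z.A -
    (show F.obj z.A ⟶ (T.toFunctor ⋙ F).obj z.A from F.map z.a)
  naturality z z' f := by
    dsimp [Comonad.forget]
    rw [Preadditive.comp_sub, Preadditive.sub_comp, ← F.map_comp, ← f.h, F.map_comp]
    congr 1
    exact ρ.naturality f.f

/-- `Θ(F)`, defined as a kernel in the functor category. -/
noncomputable def Th : T.Coalgebra ⥤ X := kernel (phi T F ρ)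

/-- The inclusion `Θ(F) ⟶ F ∘ U`. -/
noncomputable def iot : Th T F ρ ⟶ T.forget ⋙ F := kernel.ι (phi T F ρ)

lemma iot_phi (z : T.Coalgebra) : (iot T F ρ).app z ≫ (phi T F ρ).app z = 0 := by
  rw [iot]
  erw [← NatTrans.comp_app, kernel.condition, zero_app]

lemma wEq (z : T.Coalgebra) :
    (iot T F ρ).app z ≫ ρ.app z.A = (iot T F ρ).app z ≫ F.map z.a := by
  have := iot_phi T F ρ z
  simp only [phi_app] at this
  erw [Preadditive.comp_sub] at this
  rw [sub_eq_zero] at this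
  exact this

/-- Pointwise, `iot` is a kernel fork for `phi`. -/
noncomputable def klim (z : T.Coalgebra) :
    IsLimit (KernelFork.ofι ((iot T F ρ).app z) (iot_phi T F ρ z)) := by
  exact isLimitOfHasKernelOfPreservesLimit ((evaluation T.Coalgebra X).obj z) (phi T F ρ)

/-- Pointwise, `iot` is an equalizer fork. -/
noncomputable def flim (z : T.Coalgebra) :
    IsLimit (Fork.ofι ((iot T F ρ).app z) (wEq T F ρ z)) := by
  exact Preadditive.isLimitForkOfKernelFork (klim T F ρ z)

section Limits

variable {J : Type*} [Category J] {D : J ⥤ T.Coalgebra} {c : Cone D}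

/-- `Θ(F)` sends a limit cone to a limit cone, provided `F ∘ U` and `F ∘ T ∘ U` do. -/
noncomputable def mapConeLimit (hc : IsLimit c)
    (hG : IsLimit ((T.forget ⋙ F).mapCone c))
    (hH : IsLimit ((T.forget ⋙ T.toFunctor ⋙ F).mapCone c)) :
    IsLimit ((Th T F ρ).mapCone c) := by
  -- the comparison morphism into `F (U c.pt)` associated to a test cone
  let u : ∀ s : Cone (D ⋙ Th T F ρ), s.pt ⟶ (T.forget ⋙ F).obj c.pt := fun s =>
    hG.lift ((Cones.postcompose (Functor.whiskerLeft D (iot T F ρ))).obj s)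
  have hu : ∀ (s : Cone (D ⋙ Th T F ρ)) (j : J),
      u s ≫ (T.forget ⋙ F).map (c.π.app j) = s.π.app j ≫ (iot T F ρ).app (D.obj j) := by
    intro s j
    exact hG.fac ((Cones.postcompose (Functor.whiskerLeft D (iot T F ρ))).obj s) j
  have hu0 : ∀ s : Cone (D ⋙ Th T F ρ), u s ≫ (phi T F ρ).app c.pt = 0 := by
    intro s
    apply hH.hom_ext
    intro j
    dsimp only [Functor.mapCone_π_app]
    rw [Category.assoc, zero_comp,
      show (phi T F ρ).app c.pt ≫ (T.forget ⋙ T.toFunctor ⋙ F).map (c.π.app j)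
        = (T.forget ⋙ F).map (c.π.app j) ≫ (phi T F ρ).app (D.obj j) from
        ((phi T F ρ).naturality (c.π.app j)).symm,
      ← Category.assoc, hu s j, Category.assoc, iot_phi, comp_zero]
  let l : ∀ s : Cone (D ⋙ Th T F ρ), s.pt ⟶ (Th T F ρ).obj c.pt := fun s =>
    (klim T F ρ c.pt).lift (KernelFork.ofι (u s) (hu0 s))
  have hl : ∀ s : Cone (D ⋙ Th T F ρ), l s ≫ (iot T F ρ).app c.pt = u s := by
    intro s
    simpa using (klim T F ρ c.pt).fac (KernelFork.ofι (u s) (hu0 s))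
      WalkingParallelPair.zero
  refine ⟨l, ?_, ?_⟩
  · intro s j
    apply Fork.IsLimit.hom_ext (klim T F ρ (D.obj j))
    dsimp only [Functor.mapCone_π_app]
    rw [Fork.ι_ofι, Category.assoc]
    erw [(iot T F ρ).naturality (c.π.app j)]
    simp only [Functor.const_obj_obj]
    rw [← Category.assoc, hl s, hu s j]
  · intro s m hm
    simp only [Functor.mapCone_π_app] at hm
    apply Fork.IsLimit.hom_ext (klim T F ρ c.pt)
    rw [Fork.ι_ofι, hl s]
    apply hG.hom_ext
    intro j
    dsimp only [Functor.mapCone_π_app]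
    rw [Category.assoc]
    erw [← (iot T F ρ).naturality (c.π.app j)]
    simp only [Functor.const_obj_obj]
    rw [← Category.assoc, hm j, hu s j]

end Limits

lemma Th_preservesFiniteLimits [PreservesFiniteLimits T.toFunctor]
    [PreservesFiniteLimits F] : PreservesFiniteLimits (Th T F ρ) := by
  constructor
  intro J _ _
  constructor
  intro D
  haveI : HasLimit D := Comonad.forget_creates_limits_of_comonad_preserves D
  haveI : PreservesLimitsOfShape J (Comonad.forget T) :=
    preservesLimitOfShape_of_createsLimitsOfShape_and_hasLimitsOfShape _
  haveI : PreservesLimitsOfShape J (T.forget ⋙ F) := inferInstance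
  haveI : PreservesLimitsOfShape J (T.forget ⋙ T.toFunctor ⋙ F) := inferInstance
  exact preservesLimit_of_preserves_limit_cone (limit.isLimit D)
    (mapConeLimit T F ρ (limit.isLimit D)
      (isLimitOfPreserves (T.forget ⋙ F) (limit.isLimit D))
      (isLimitOfPreserves (T.forget ⋙ T.toFunctor ⋙ F) (limit.isLimit D)))

section Cofree

variable (hcounit : ∀ m : M, ρ.app m ≫ F.map (T.ε.app m) = 𝟙 (F.obj m))
variable (hcoassoc : ∀ m : M,
      ρ.app m ≫ F.map (T.δ.app m) = ρ.app m ≫ ρ.app (T.toFunctor.obj m))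

include hcounit hcoassoc

/-- The canonical fork at a cofree coalgebra, with point `F.obj m`. -/
noncomputable def cofreeFork (m : M) :
    IsLimit (Fork.ofι (ρ.app m) (f := ρ.app ((T.cofree.obj m).A))
      (g := F.map ((T.cofree.obj m).a)) (hcoassoc m).symm) := by
  refine Fork.IsLimit.mk _ (fun s => s.ι ≫ F.map (T.ε.app m)) (fun s => ?_) (fun s l hl => ?_)
  · have hnat : F.map (T.ε.app m) ≫ ρ.app m
        = ρ.app (T.toFunctor.obj m) ≫ F.map (T.toFunctor.map (T.ε.app m)) :=
      ρ.naturality (T.ε.app m)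
    have hcond : s.ι ≫ ρ.app (T.toFunctor.obj m) = s.ι ≫ F.map (T.δ.app m) := s.condition
    change (s.ι ≫ F.map (T.ε.app m)) ≫ ρ.app m = s.ι
    erw [Category.assoc, hnat, ← Category.assoc, hcond, Category.assoc,
      ← F.map_comp]
    erw [Comonad.right_counit, F.map_id, Category.comp_id]
  · change l ≫ ρ.app m = s.ι at hl
    erw [← hl, Category.assoc, hcounit, Category.comp_id]

/-- The isomorphism `Θ(F)(cofree m) ≅ F m`. -/
noncomputable def cofreeIsoApp (m : M) : (Th T F ρ).obj (T.cofree.obj m) ≅ F.obj m :=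
  (flim T F ρ (T.cofree.obj m)).conePointUniqueUpToIso (cofreeFork T F ρ hcounit hcoassoc m)

lemma cofreeIsoApp_hom_comp (m : M) :
    (cofreeIsoApp T F ρ hcounit hcoassoc m).hom ≫ ρ.app m = (iot T F ρ).app (T.cofree.obj m) :=
  (flim T F ρ (T.cofree.obj m)).conePointUniqueUpToIso_hom_comp
    (cofreeFork T F ρ hcounit hcoassoc m) WalkingParallelPair.zero

/-- The natural isomorphism `cofree ⋙ Θ(F) ≅ F`. -/
noncomputable def cofreeIso : T.cofree ⋙ Th T F ρ ≅ F := by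
  refine NatIso.ofComponents (fun m => cofreeIsoApp T F ρ hcounit hcoassoc m) (fun {m m'} f => ?_)
  haveI : IsSplitMono (ρ.app m') := IsSplitMono.mk' ⟨F.map (T.ε.app m'), hcounit m'⟩
  rw [← cancel_mono (ρ.app m')]
  have hnat : F.map f ≫ ρ.app m' = ρ.app m ≫ F.map (T.toFunctor.map f) := ρ.naturality f
  rw [Category.assoc, Category.assoc, cofreeIsoApp_hom_comp, hnat, ← Category.assoc,
    cofreeIsoApp_hom_comp]
  have := (iot T F ρ).naturality (T.cofree.map f)
  dsimp only [Functor.comp_map] at this ⊢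
  exact this

end Cofree

end PointwiseEqAux

/-- **Pointwise equalizer formula for the functor corresponding to a
`T*`-comodule.**
Let `T` be a left exact comonad on a finite linear category `M`, `X` a finite
linear category, and `F : M → X` a left exact functor equipped with a comodule
structure `ρ : F ⟶ F ∘ T` over the comonad `T*` (given by pre-composition with
`T`) on `Fun^le(M, X)`.  Then the corresponding left exact functor
`Θ(F) : Comod_T(M) → X` can be computed pointwise as the equalizer
`Θ(F)(z) → F(U z) ⇉ F(T(U z))`, where one of the parallel morphisms is induced
by the `T*`-comodule structure of `F` and the other by the `T`-comodule
structure of `z`, and `U` is the forgetful functor; moreover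
`F ≅ Θ(F) ∘ coInd_T`. -/
theorem pointwise_equalizer_for_comodule_functor
    (k : Type*) [Field k] {M X : Type*} [Category M] [Category X]
    [Preadditive M] [CategoryTheory.Linear k M] [Abelian M]
    [Preadditive X] [CategoryTheory.Linear k X] [Abelian X]
    (T : Comonad M) [PreservesFiniteLimits T.toFunctor]
    (F : M ⥤ X) [PreservesFiniteLimits F]
    (ρ : F ⟶ T.toFunctor ⋙ F)
    (hcounit : ∀ m : M, ρ.app m ≫ F.map (T.ε.app m) = 𝟙 (F.obj m))
    (hcoassoc : ∀ m : M,
      ρ.app m ≫ F.map (T.δ.app m) = ρ.app m ≫ ρ.app (T.toFunctor.obj m)) :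
    ∃ Θ : T.Coalgebra ⥤ X, Nonempty (PreservesFiniteLimits Θ) ∧
      ∃ ι : Θ ⟶ T.forget ⋙ F,
        (∀ z : T.Coalgebra,
          ∃ w : ι.app z ≫ ρ.app z.A = ι.app z ≫ F.map z.a,
            Nonempty (IsLimit (Fork.ofι (ι.app z) w))) ∧
        Nonempty (T.cofree ⋙ Θ ≅ F) := by
  refine ⟨PointwiseEqAux.Th T F ρ, ⟨PointwiseEqAux.Th_preservesFiniteLimits T F ρ⟩,
    PointwiseEqAux.iot T F ρ, fun z => ⟨PointwiseEqAux.wEq T F ρ z,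
      ⟨PointwiseEqAux.flim T F ρ z⟩⟩,
    ⟨PointwiseEqAux.cofreeIso T F ρ hcounit hcoassoc⟩⟩
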